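/- For every integer m ≥ 0, every z ∈ ℂ, and every λ₀ ∈ ℂ with λ₀z ≠ 1, the m-th derivative of the function λ ↦ λ^m/(1−λz) at the point λ₀ equals m!/(1−λ₀z)^{m+1}. -/

import Mathlib

open Filter Set Finset Topology

/-- The set where `l * z ≠ 1` is open. -/
lemma auxOpen (z : ℂ) : IsOpen {l : ℂ | l * z ≠ 1} :=
  isOpen_compl_singleton.preimage (continuous_id.mul continuous_const)

lemma auxWithin (n : ℕ) {s : Set ℂ} (hs : IsOpen s) {x : ℂ} (hx : x ∈ s) (f : ℂ → ℂ) :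
    iteratedDerivWithin n f s x = iteratedDeriv n f x := by
  simp [iteratedDerivWithin, iteratedDeriv, iteratedFDerivWithin_of_isOpen n hs hx]

/-- iterated derivatives of `(1 - l z)⁻¹`. -/
lemma auxKey (z : ℂ) : ∀ (n : ℕ) (lam0 : ℂ), lam0 * z ≠ 1 →
    iteratedDeriv n (fun l : ℂ => (1 - l * z)⁻¹) lam0 =
      (n.factorial : ℂ) * z ^ n / (1 - lam0 * z) ^ (n + 1) := by
  intro n
  induction n with
  | zero => intro lam0 h; rw [iteratedDeriv_zero]; simp
  | succ n ih =>
    intro lam0 h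
    have hne : (1 : ℂ) - lam0 * z ≠ 0 := sub_ne_zero.mpr (Ne.symm h)
    rw [iteratedDeriv_succ]
    have hev : iteratedDeriv n (fun l : ℂ => (1 - l * z)⁻¹) =ᶠ[𝓝 lam0]
        fun l => (n.factorial : ℂ) * z ^ n * ((1 - l * z) ^ (n + 1))⁻¹ := by
      filter_upwards [(auxOpen z).mem_nhds h] with l hl
      rw [ih l hl, div_eq_mul_inv]
    rw [hev.deriv_eq]
    have h1 : HasDerivAt (fun l : ℂ => 1 - l * z) (-z) lam0 := by
      simpa using ((hasDerivAt_id lam0).mul_const z).const_sub 1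
    have h2 := ((h1.pow (n + 1)).inv (pow_ne_zero _ hne)).const_mul
      ((n.factorial : ℂ) * z ^ n)
    have h2' : HasDerivAt (fun l : ℂ => (n.factorial : ℂ) * z ^ n * ((1 - l * z) ^ (n + 1))⁻¹) _ lam0 := h2
    rw [h2'.deriv, Pi.pow_apply]
    rw [Nat.factorial_succ]
    push_cast
    field_simp
    ring
  
/-- iterated derivative of a polynomial of degree `< m`, `m` times, is zero. -/
lemma auxPoly : ∀ (m : ℕ) (c : ℕ → ℂ),
    iteratedDeriv m (fun l : ℂ => ∑ k ∈ Finset.range m, c k * l ^ k) = 0 := by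
  intro m
  induction m with
  | zero => intro c; funext x; simp
  | succ m ih =>
    intro c
    rw [iteratedDeriv_succ']
    have hd : deriv (fun l : ℂ => ∑ k ∈ Finset.range (m + 1), c k * l ^ k) =
        fun l => ∑ k ∈ Finset.range m, (c (k + 1) * ((k : ℂ) + 1)) * l ^ k := by
      funext x
      rw [deriv_fun_sum (fun k _ => ((differentiable_pow k).differentiableAt).const_mul (c k))]
      have : ∀ k, deriv (fun l : ℂ => c k * l ^ k) x = c k * ((k : ℂ) * x ^ (k - 1)) := by
        intro k
        rw [deriv_const_mul _ ((differentiable_pow k).differentiableAt), deriv_pow_field]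
      simp only [this]
      rw [Finset.sum_range_succ']
      simp [mul_comm, mul_assoc, mul_left_comm]
    rw [hd, ih]

/-- iterated derivative of `l ^ m`, `m` times. -/
lemma auxPow : ∀ (m : ℕ) (x : ℂ), iteratedDeriv m (fun l : ℂ => l ^ m) x = m.factorial := by
  intro m
  induction m with
  | zero => intro x; simp
  | succ m ih =>
    intro x
    rw [iteratedDeriv_succ']
    have hd : deriv (fun l : ℂ => l ^ (m + 1)) = fun l : ℂ => ((m : ℂ) + 1) * l ^ m := by
      funext l
      rw [deriv_pow_field]
      push_cast
      ring_nf
    have hcm : ContDiffOn ℂ m (fun l : ℂ => l ^ m) Set.univ :=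
      (contDiff_id.pow m).contDiffOn
    rw [hd, ← iteratedDerivWithin_univ,
      iteratedDerivWithin_const_mul (Set.mem_univ x) uniqueDiffOn_univ ((m : ℂ) + 1) (hcm x (Set.mem_univ x)),
      iteratedDerivWithin_univ, ih]
    rw [Nat.factorial_succ]
    push_cast
    ring

/-- for `m ≥ 0`, `z ∈ ℂ` and `λ₀z ≠ 1`, the `m`-th complex
derivative of `λ ↦ λ^m/(1-λz)` at `λ₀` equals `m!/(1-λ₀z)^{m+1}`. -/
theorem iteratedDeriv_pow_div_one_sub (m : ℕ) (z lam0 : ℂ) (h : lam0 * z ≠ 1) :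
    iteratedDeriv m (fun lam : ℂ => lam ^ m / (1 - lam * z)) lam0 =
      (m.factorial : ℂ) / (1 - lam0 * z) ^ (m + 1) := by
  have hne : (1 : ℂ) - lam0 * z ≠ 0 := sub_ne_zero.mpr (Ne.symm h)
  rcases eq_or_ne z 0 with rfl | hz
  · have : (fun lam : ℂ => lam ^ m / (1 - lam * 0)) = fun lam : ℂ => lam ^ m := by
      funext l; simp
    rw [this, auxPow m lam0]
    simp
  · set s := {l : ℂ | l * z ≠ 1} with hs
    have hsopen : IsOpen s := auxOpen z
    have hmem : lam0 ∈ s := h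
    set g : ℂ → ℂ := fun l => z⁻¹ ^ m * (1 - l * z)⁻¹ with hg
    set p : ℂ → ℂ := fun l => ∑ k ∈ Finset.range m, (z⁻¹ ^ m * z ^ k) * l ^ k with hp
    have hev : (fun lam : ℂ => lam ^ m / (1 - lam * z)) =ᶠ[𝓝 lam0] (g - p) := by
      filter_upwards [hsopen.mem_nhds hmem] with l hl
      have hl' : l * z ≠ 1 := hl
      have hlne : (1 : ℂ) - l * z ≠ 0 := sub_ne_zero.mpr (Ne.symm hl')
      have hsum : ∑ k ∈ Finset.range m, (z⁻¹ ^ m * z ^ k) * l ^ k =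
          z⁻¹ ^ m * (((l * z) ^ m - 1) / (l * z - 1)) := by
        rw [← geom_sum_eq hl' m, Finset.mul_sum]
        refine Finset.sum_congr rfl fun k _ => ?_
        rw [mul_pow]; ring
      have hlne' : l * z - 1 ≠ 0 := sub_ne_zero.mpr hl'
      simp only [Pi.sub_apply, hg, hp]
      rw [hsum]
      field_simp
      have hzz : z ^ m * z⁻¹ ^ m = 1 := by rw [← mul_pow, mul_inv_cancel₀ hz, one_pow]
      linear_combination (l ^ m - l * l ^ m * z) * hzz
    rw [hev.iteratedDeriv_eq]
    have hcg : ContDiffOn ℂ m g s := by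
      apply ContDiffOn.mul contDiffOn_const
      exact (ContDiffOn.inv ((contDiff_const.sub (contDiff_id.mul contDiff_const)).contDiffOn)
        (fun l hl => sub_ne_zero.mpr (Ne.symm hl)))
    have hcp : ContDiffOn ℂ m p s := by
      apply ContDiffOn.sum
      intro k _
      exact (contDiff_const.mul (contDiff_id.pow k)).contDiffOn
    rw [← auxWithin m hsopen hmem, iteratedDerivWithin_sub hmem hsopen.uniqueDiffOn (hcg lam0 hmem) (hcp lam0 hmem),
      auxWithin m hsopen hmem, auxWithin m hsopen hmem]
    have hpg : iteratedDeriv m p lam0 = 0 := by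
      rw [hp, auxPoly m (fun k => z⁻¹ ^ m * z ^ k)]; rfl
    have hgg : iteratedDeriv m g lam0 = z⁻¹ ^ m * ((m.factorial : ℂ) * z ^ m / (1 - lam0 * z) ^ (m + 1)) := by
      have hinv : ContDiffOn ℂ m (fun l : ℂ => (1 - l * z)⁻¹) s :=
        ContDiffOn.inv ((contDiff_const.sub (contDiff_id.mul contDiff_const)).contDiffOn)
          (fun l hl => sub_ne_zero.mpr (Ne.symm hl))
      rw [hg, ← auxWithin m hsopen hmem,
        iteratedDerivWithin_const_mul hmem hsopen.uniqueDiffOn (z⁻¹ ^ m) (hinv lam0 hmem),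
        auxWithin m hsopen hmem, auxKey z m lam0 h]
    rw [hpg, hgg, sub_zero]
    field_simp
    have hzz : (1 / z) ^ m * z ^ m = 1 := by rw [← mul_pow, one_div, inv_mul_cancel₀ hz, one_pow]
    rw [mul_right_comm, hzz, one_mul]
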